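/- If substitutions σ and σ' are similar (for every variable X, the words σ(X) and σ'(X) are similar) and both are solutions-candidates for the same equation sides, then σ(U) and σ'(U) are similar words, for every side U of the equation. -/

import Mathlib

variable {Γ 𝒳 : Type*}

def subApp (σ : 𝒳 → List Γ) (w : List (Γ ⊕ 𝒳)) : List Γ :=
  w.flatMap (Sum.elim (fun a => [a]) σ)

def blocksWord (L : List (Γ × ℕ)) : List Γ :=
  L.flatMap (fun p => List.replicate p.2 p.1)

def goodBlocks (L : List (Γ × ℕ)) : Prop :=
  (∀ p ∈ L, 1 ≤ p.2) ∧ L.Chain' (fun p q => p.1 ≠ q.1)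

def WordSimilar (w w' : List Γ) : Prop :=
  ∃ L L' : List (Γ × ℕ), goodBlocks L ∧ goodBlocks L' ∧
    L.map Prod.fst = L'.map Prod.fst ∧ w = blocksWord L ∧ w' = blocksWord L'

open Classical in
/-- Merge adjacent blocks with equal letters. -/
noncomputable def mergeB : List (Γ × ℕ) → List (Γ × ℕ)
  | [] => []
  | p :: rest => match mergeB rest with
    | [] => [p]
    | q :: rest' => if p.1 = q.1 then (p.1, p.2 + q.2) :: rest' else p :: q :: rest'

open Classical in
/-- Dedup adjacent equal letters. -/
noncomputable def ddup : List Γ → List Γ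
  | [] => []
  | a :: rest => match ddup rest with
    | [] => [a]
    | b :: r => if a = b then b :: r else a :: b :: r

theorem blocksWord_append (L M : List (Γ × ℕ)) :
    blocksWord (L ++ M) = blocksWord L ++ blocksWord M := by
  simp [blocksWord]

theorem blocksWord_mergeB (L : List (Γ × ℕ)) :
    blocksWord (mergeB L) = blocksWord L := by
  induction L with
  | nil => rfl
  | cons p rest ih =>
    rcases hm : mergeB rest with _ | ⟨q, rest'⟩ <;> rw [hm] at ih
    · simp only [mergeB, hm]
      simp only [blocksWord, List.flatMap_nil, List.flatMap_cons] at ih ⊢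
      rw [← ih]
    · simp only [mergeB, hm]
      by_cases hpq : p.1 = q.1
      · simp only [if_pos hpq]
        simp only [blocksWord, List.flatMap_cons] at ih ⊢
        rw [← ih, hpq, List.replicate_add, List.append_assoc]
      · simp only [if_neg hpq]
        simp only [blocksWord, List.flatMap_cons] at ih ⊢
        rw [← ih]

theorem good_mergeB (L : List (Γ × ℕ)) (hpos : ∀ p ∈ L, 1 ≤ p.2) :
    goodBlocks (mergeB L) := by
  induction L with
  | nil => exact ⟨by simp [mergeB], by simp [mergeB, List.Chain']⟩
  | cons p rest ih =>
    have hp : 1 ≤ p.2 := hpos p (by simp)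
    have hrest : ∀ q ∈ rest, 1 ≤ q.2 := fun q hq => hpos q (by simp [hq])
    obtain ⟨ih1, ih2⟩ := ih hrest
    rcases hm : mergeB rest with _ | ⟨q, rest'⟩ <;> rw [hm] at ih1 ih2 <;>
      simp only [mergeB, hm]
    · exact ⟨by intro r hr; simp at hr; simp [hr, hp], by simp [List.Chain']⟩
    · by_cases hpq : p.1 = q.1
      · simp only [if_pos hpq]
        constructor
        · intro r hr
          rcases List.mem_cons.mp hr with hr | hr
          · simp [hr]; omega
          · exact ih1 r (by simp [hr])
        · rcases rest' with _ | ⟨r, rest''⟩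
          · simp [List.Chain']
          · refine List.isChain_cons_cons.mpr ⟨?_, (List.isChain_cons_cons.mp ih2).2⟩
            have := (List.isChain_cons_cons.mp ih2).1
            simpa [hpq] using this
      · simp only [if_neg hpq]
        refine ⟨?_, ?_⟩
        · intro r hr
          rcases List.mem_cons.mp hr with hr | hr
          · simp [hr, hp]
          · exact ih1 r hr
        · exact List.isChain_cons_cons.mpr ⟨hpq, ih2⟩

theorem fst_mergeB (L : List (Γ × ℕ)) :
    (mergeB L).map Prod.fst = ddup (L.map Prod.fst) := by
  induction L with
  | nil => rfl
  | cons p rest ih =>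
    rcases hm : mergeB rest with _ | ⟨q, rest'⟩ <;> rw [hm] at ih <;>
      simp only [mergeB, hm, List.map_cons, ddup, ← ih]
    · try simp
    · by_cases hpq : p.1 = q.1
      · simp [if_pos hpq, hpq]
      · simp [if_neg hpq]

theorem similar_of_weak {w w' : List Γ} (L L' : List (Γ × ℕ))
    (hL : ∀ p ∈ L, 1 ≤ p.2) (hL' : ∀ p ∈ L', 1 ≤ p.2)
    (hfst : L.map Prod.fst = L'.map Prod.fst)
    (hw : w = blocksWord L) (hw' : w' = blocksWord L') :
    WordSimilar w w' := by
  refine ⟨mergeB L, mergeB L', good_mergeB L hL, good_mergeB L' hL', ?_, ?_, ?_⟩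
  · rw [fst_mergeB, fst_mergeB, hfst]
  · rw [blocksWord_mergeB, hw]
  · rw [blocksWord_mergeB, hw']

theorem similar_append {w₁ w₁' w₂ w₂' : List Γ}
    (h₁ : WordSimilar w₁ w₁') (h₂ : WordSimilar w₂ w₂') :
    WordSimilar (w₁ ++ w₂) (w₁' ++ w₂') := by
  obtain ⟨L₁, L₁', ⟨h1p, _⟩, ⟨h1p', _⟩, h1f, h1w, h1w'⟩ := h₁
  obtain ⟨L₂, L₂', ⟨h2p, _⟩, ⟨h2p', _⟩, h2f, h2w, h2w'⟩ := h₂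
  refine similar_of_weak (L₁ ++ L₂) (L₁' ++ L₂') ?_ ?_ ?_ ?_ ?_
  · intro p hp; rcases List.mem_append.mp hp with hp | hp
    exacts [h1p p hp, h2p p hp]
  · intro p hp; rcases List.mem_append.mp hp with hp | hp
    exacts [h1p' p hp, h2p' p hp]
  · simp [h1f, h2f]
  · rw [blocksWord_append, h1w, h2w]
  · rw [blocksWord_append, h1w', h2w']

theorem similar_singleton (a : Γ) : WordSimilar [a] [a] :=
  ⟨[(a, 1)], [(a, 1)], ⟨by simp, by simp [List.Chain']⟩, ⟨by simp, by simp [List.Chain']⟩, rfl, by simp [blocksWord], by simp [blocksWord]⟩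

theorem similar_nil : WordSimilar ([] : List Γ) [] :=
  ⟨[], [], ⟨by simp, by simp [List.Chain']⟩, ⟨by simp, by simp [List.Chain']⟩, rfl, rfl, rfl⟩

/-- If σ and σ' are similar substitutions (σ(X) is similar to σ'(X) for every
variable X occurring in U), then σ(U) and σ'(U) are similar words. -/
theorem stmt8 (U : List (Γ ⊕ 𝒳)) (σ σ' : 𝒳 → List Γ)
    (h : ∀ X : 𝒳, Sum.inr X ∈ U → WordSimilar (σ X) (σ' X)) :
    WordSimilar (subApp σ U) (subApp σ' U) := by
  induction U with
  | nil => exact similar_nil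
  | cons x U ih =>
    have hxU : subApp σ (x :: U) = Sum.elim (fun a => [a]) σ x ++ subApp σ U := by
      simp [subApp]
    have hxU' : subApp σ' (x :: U) = Sum.elim (fun a => [a]) σ' x ++ subApp σ' U := by
      simp [subApp]
    rw [hxU, hxU']
    refine similar_append ?_ (ih fun X hX => h X (by simp [hX]))
    rcases x with a | X
    · exact similar_singleton a
    · exact h X (by simp)
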